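/- Discrete Gronwall inequality: Let τ, B ≥ 0 and let (a_k), (b_k), (c_k), (γ_k) be sequences of nonnegative reals such that for all n ≥ 0, a_n + τ ∑_{k=0}^n b_k ≤ τ ∑_{k=0}^n γ_k a_k + τ ∑_{k=0}^n c_k + B. Suppose τ γ_k < 1 for all k and set σ_k = (1 − τ γ_k)^{-1}. Then for all n ≥ 0, a_n + τ ∑_{k=0}^n b_k ≤ exp(τ ∑_{k=0}^n γ_k σ_k) · (τ ∑_{k=0}^n c_k + B). -/

import Mathlib

open Finset

namespace Heywood

/-- Discrete Gronwall inequality (Heywood–Rannacher). -/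
theorem discrete_gronwall (τ B : ℝ) (a b c γ : ℕ → ℝ)
    (hτ : 0 ≤ τ) (hB : 0 ≤ B)
    (ha : ∀ k, 0 ≤ a k) (hb : ∀ k, 0 ≤ b k) (hc : ∀ k, 0 ≤ c k) (hγ : ∀ k, 0 ≤ γ k)
    (hγτ : ∀ k, τ * γ k < 1)
    (hrec : ∀ n : ℕ, a n + τ * ∑ k ∈ range (n + 1), b k ≤
      τ * ∑ k ∈ range (n + 1), γ k * a k + τ * ∑ k ∈ range (n + 1), c k + B) :
    ∀ n : ℕ, a n + τ * ∑ k ∈ range (n + 1), b k ≤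
      Real.exp (τ * ∑ k ∈ range (n + 1), γ k * (1 - τ * γ k)⁻¹) *
        (τ * ∑ k ∈ range (n + 1), c k + B) := by
  have hpos : ∀ k, 0 < 1 - τ * γ k := fun k => by linarith [hγτ k]
  set σ : ℕ → ℝ := fun k => (1 - τ * γ k)⁻¹ with hσdef
  have hσnn : ∀ k, 0 ≤ σ k := fun k => le_of_lt (inv_pos.mpr (hpos k))
  have htγ : ∀ k, 0 ≤ τ * γ k := fun k => mul_nonneg hτ (hγ k)
  set S : ℕ → ℝ := fun n => τ * ∑ k ∈ range n, c k + B with hSdef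
  set E : ℕ → ℝ := fun n => τ * ∑ k ∈ range n, γ k * a k + S n with hEdef
  set P : ℕ → ℝ := fun n => ∏ k ∈ range n, (1 + τ * γ k * σ k) with hPdef
  have hSnn : ∀ n, 0 ≤ S n := fun n =>
    add_nonneg (mul_nonneg hτ (sum_nonneg fun k _ => hc k)) hB
  have hfac : ∀ k, 1 ≤ 1 + τ * γ k * σ k := fun k => by
    nlinarith [mul_nonneg (htγ k) (hσnn k)]
  have hP1 : ∀ n, 1 ≤ P n := by
    intro n
    induction n with
    | zero => simp [hPdef]
    | succ n ih =>
      have h : P (n + 1) = P n * (1 + τ * γ n * σ n) := by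
        simp only [hPdef]; exact prod_range_succ _ _
      nlinarith [hfac n]
  have hrec' : ∀ n, a n + τ * ∑ k ∈ range (n + 1), b k ≤ E (n + 1) := by
    intro n
    have := hrec n
    simp only [hEdef, hSdef]
    linarith
  have key : ∀ n, E n ≤ P n * S n := by
    intro n
    induction n with
    | zero => simp [hEdef, hSdef, hPdef]
    | succ n ih =>
      have hstep : E (n + 1) = E n + τ * γ n * a n + τ * c n := by
        simp only [hEdef, hSdef, sum_range_succ]
        ring
      have han : a n ≤ E (n + 1) := by
        have h1 := hrec' n
        have h2 : 0 ≤ τ * ∑ k ∈ range (n + 1), b k :=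
          mul_nonneg hτ (sum_nonneg fun k _ => hb k)
        linarith
      have hσmul : (1 - τ * γ n) * σ n = 1 := mul_inv_cancel₀ (ne_of_gt (hpos n))
      have ha1 : a n * (1 - τ * γ n) ≤ E n + τ * c n := by
        rw [hstep] at han; nlinarith
      have ha2 : a n ≤ σ n * (E n + τ * c n) := by
        have h := mul_le_mul_of_nonneg_right ha1 (hσnn n)
        calc a n = a n * (1 - τ * γ n) * σ n := by rw [mul_assoc, hσmul, mul_one]
          _ ≤ (E n + τ * c n) * σ n := h
          _ = σ n * (E n + τ * c n) := mul_comm _ _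
      have h3 : τ * γ n * a n ≤ τ * γ n * (σ n * (E n + τ * c n)) :=
        mul_le_mul_of_nonneg_left ha2 (htγ n)
      have h4 : E (n + 1) ≤ (1 + τ * γ n * σ n) * (E n + τ * c n) := by
        rw [hstep]; nlinarith
      have h5 : E n + τ * c n ≤ P n * (S n + τ * c n) := by
        nlinarith [hP1 n, mul_nonneg hτ (hc n)]
      have h6 : E (n + 1) ≤ (1 + τ * γ n * σ n) * (P n * (S n + τ * c n)) := by
        calc E (n + 1) ≤ (1 + τ * γ n * σ n) * (E n + τ * c n) := h4
        _ ≤ (1 + τ * γ n * σ n) * (P n * (S n + τ * c n)) :=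
          mul_le_mul_of_nonneg_left h5 (by linarith [hfac n])
      have heq : (1 + τ * γ n * σ n) * (P n * (S n + τ * c n)) = P (n + 1) * S (n + 1) := by
        simp only [hPdef, hSdef, prod_range_succ, sum_range_succ]
        ring
      linarith [h6, heq.le]
  intro n
  have hPexp : P (n + 1) ≤ Real.exp (τ * ∑ k ∈ range (n + 1), γ k * σ k) := by
    rw [mul_sum, Real.exp_sum]
    refine Finset.prod_le_prod (fun k _ => by linarith [hfac k]) (fun k _ => ?_)
    have := Real.add_one_le_exp (τ * (γ k * σ k))
    have hrw : τ * γ k * σ k = τ * (γ k * σ k) := by ring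
    linarith [hrw.le]
  calc a n + τ * ∑ k ∈ range (n + 1), b k ≤ E (n + 1) := hrec' n
    _ ≤ P (n + 1) * S (n + 1) := key (n + 1)
    _ ≤ Real.exp (τ * ∑ k ∈ range (n + 1), γ k * σ k) * S (n + 1) :=
        mul_le_mul_of_nonneg_right hPexp (hSnn _)
    _ = Real.exp (τ * ∑ k ∈ range (n + 1), γ k * (1 - τ * γ k)⁻¹) *
        (τ * ∑ k ∈ range (n + 1), c k + B) := by simp [hσdef, hSdef]
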